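/- arXiv:1007.4356 — 2 statements merged into one kernel-verified Lean document; each statement's English description precedes it below -/
import Mathlib

section
/- Let N be an admissible algebra with admissible projection π and let λ : N → Ann(N) be any linear map vanishing on Ann(N). Then there exists c ∈ N with π(c) = 0 such that λ(u) = π(cu) for all u ∈ N. -/
open Finset

/-- Annihilator `Ann(N) = {u ∈ N : uN = 0}` of a non-unital commutative ℂ-algebra. -/
def annN (N : Type*) [NonUnitalCommRing N] [Module ℂ N] [IsScalarTower ℂ N N] :
    Submodule ℂ N where
  carrier := {u | ∀ v : N, u * v = 0}
  add_mem' := fun ha hb v => by rw [add_mul, ha v, hb v, add_zero]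
  zero_mem' := fun v => zero_mul v
  smul_mem' := fun c a ha v => by rw [smul_mul_assoc, ha v, smul_zero]

/-- The descending chain of ideals: `npow N j` is `N^j` for `j ≥ 1`
(`N^1 = N`, `N^{j+1} = span(N·N^j)`; `npow N 0 := ⊤` by convention). -/
def npow (N : Type*) [NonUnitalCommRing N] [Module ℂ N] : ℕ → Submodule ℂ N
  | 0 => ⊤
  | 1 => ⊤
  | (j+2) => Submodule.span ℂ {x : N | ∃ u : N, ∃ v ∈ npow N (j+1), x = u * v}

/-- Powers `u^m` of an element in a non-unital commutative ring
(`upow u 0 := 0` by convention; only `m ≥ 1` is used). -/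
def upow {N : Type*} [NonUnitalCommRing N] (u : N) : ℕ → N
  | 0 => 0
  | 1 => u
  | (m+2) => u * upow u (m+1)

section Aux

variable {N : Type*} [NonUnitalCommRing N] [Module ℂ N] [SMulCommClass ℂ N N]
    [IsScalarTower ℂ N N]

lemma mem_annN_iff {u : N} : u ∈ annN N ↔ ∀ v : N, u * v = 0 := Iff.rfl

lemma mul_mem_npow (u : N) : ∀ j, ∀ v ∈ npow N j, u * v ∈ npow N (j + 1)
  | 0, v, _ => by simp [npow]
  | (j+1), v, hv => Submodule.subset_span ⟨u, v, hv, rfl⟩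

lemma npow_succ_le : ∀ j, npow N (j + 1) ≤ npow N j
  | 0 => le_top
  | 1 => le_top
  | (j+2) => by
      show npow N (j+3) ≤ npow N (j+2)
      rw [show npow N (j+3) = Submodule.span ℂ
        {x : N | ∃ u : N, ∃ v ∈ npow N (j+2), x = u * v} from rfl, Submodule.span_le]
      rintro x ⟨u, v, hv, rfl⟩
      exact mul_mem_npow u (j+1) v (npow_succ_le (j+1) hv)

lemma npow_antitone {i j : ℕ} (h : i ≤ j) : npow N j ≤ npow N i := by
  induction j, h using Nat.le_induction with
  | base => exact le_rfl
  | succ j hij ih => exact (npow_succ_le j).trans ih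

lemma reach_ann {ν : ℕ} (hnil : npow N (ν + 1) = ⊥) :
    ∀ k j, ν + 1 ≤ j + k → ∀ x ∈ npow N j, x ∉ annN N →
      ∃ v : N, x * v ∈ annN N ∧ x * v ≠ 0 := by
  intro k
  induction k with
  | zero =>
    intro j hj x hx hxa
    exfalso
    have : x ∈ (⊥ : Submodule ℂ N) := hnil ▸ npow_antitone (by omega) hx
    rw [Submodule.mem_bot] at this
    exact hxa (this ▸ (annN N).zero_mem)
  | succ k ih =>
    intro j hj x hx hxa
    obtain ⟨u, hu⟩ : ∃ u : N, x * u ≠ 0 := by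
      by_contra h
      push_neg at h
      exact hxa h
    by_cases hcu : x * u ∈ annN N
    · exact ⟨u, hcu, hu⟩
    · have hxu : x * u ∈ npow N (j + 1) := by
        rw [mul_comm]; exact mul_mem_npow u j x hx
      obtain ⟨v, hv1, hv2⟩ := ih (j + 1) (by omega) (x * u) hxu hcu
      exact ⟨u * v, by rwa [← mul_assoc], by rwa [← mul_assoc]⟩

end Aux

/-- For an admissible algebra `N` with admissible projection `π` and any linear
map `λ : N → Ann(N)` vanishing on `Ann(N)`, there is `c ∈ N` with `π(c) = 0` and
`λ(u) = π(cu)` for all `u`. -/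
theorem stmt5 (N : Type*) [NonUnitalCommRing N] [Module ℂ N] [SMulCommClass ℂ N N]
    [IsScalarTower ℂ N N] [FiniteDimensional ℂ N]
    (ν : ℕ) (hnil : npow N (ν + 1) = ⊥) (hann : Module.finrank ℂ (annN N) = 1)
    (π : N →ₗ[ℂ] N) (hπr : ∀ u : N, π u ∈ annN N) (hπid : ∀ u ∈ annN N, π u = u)
    (lam : N →ₗ[ℂ] N) (hlr : ∀ u : N, lam u ∈ annN N) (hlz : ∀ u ∈ annN N, lam u = 0) :
    ∃ c : N, π c = 0 ∧ ∀ u : N, lam u = π (c * u) := by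
  classical
  -- obtain a nonzero generator `a` of `annN N`
  have hbot : annN N ≠ ⊥ := by
    intro h
    rw [h, finrank_bot] at hann
    exact zero_ne_one hann
  obtain ⟨a, haA, ha0⟩ := Submodule.ne_bot_iff _ |>.mp hbot
  have hspan : Submodule.span ℂ {a} = annN N := by
    apply Submodule.eq_of_le_of_finrank_le
    · rw [Submodule.span_le, Set.singleton_subset_iff]; exact haA
    · rw [hann, finrank_span_singleton ha0]
  -- a dual vector `g` with `g a = 1`
  obtain ⟨g0, hg0⟩ : ∃ g0 : Module.Dual ℂ N, g0 a ≠ 0 := by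
    by_contra h
    push_neg at h
    exact ha0 ((Module.forall_dual_apply_eq_zero_iff ℂ a).mp h)
  set g : Module.Dual ℂ N := (g0 a)⁻¹ • g0 with hg
  have hga : g a = 1 := by
    simp [hg, inv_mul_cancel₀ hg0]
  -- every element of `annN N` is `g x • a`
  have hrep : ∀ x ∈ annN N, x = g x • a := by
    intro x hx
    rw [← hspan] at hx
    obtain ⟨t, rfl⟩ := Submodule.mem_span_singleton.mp hx
    rw [map_smul, smul_eq_mul, hga, mul_one]
  -- nondegeneracy
  have hnd : ∀ c : N, (∀ u : N, g (π (c * u)) = 0) → c ∈ annN N := by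
    intro c hc
    by_contra h
    obtain ⟨v, hv1, hv2⟩ := reach_ann hnil ν 1 (by omega) c trivial h
    have h1 : π (c * v) = c * v := hπid _ hv1
    have h2 : c * v = g (c * v) • a := hrep _ hv1
    have h3 : g (c * v) = 0 := by rw [← h1]; exact hc v
    rw [h3, zero_smul] at h2
    exact hv2 h2
  -- the map `c ↦ (u ↦ g (π (c * u)))`
  set Φ : N →ₗ[ℂ] Module.Dual ℂ N :=
    { toFun := fun c => g ∘ₗ π ∘ₗ LinearMap.mulLeft ℂ c
      map_add' := by
        intro x y
        ext u
        simp [add_mul]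
      map_smul' := by
        intro s x
        ext u
        simp [smul_mul_assoc] } with hΦ
  have hΦapp : ∀ c u : N, Φ c u = g (π (c * u)) := fun c u => rfl
  have hker : LinearMap.ker Φ = annN N := by
    ext c
    constructor
    · intro hc
      refine hnd c fun u => ?_
      have := LinearMap.congr_fun (LinearMap.mem_ker.mp hc) u
      simpa [hΦapp] using this
    · intro hc
      rw [LinearMap.mem_ker]
      ext u
      simp [hΦapp, hc u]
  have hrange : LinearMap.range Φ ≤ (annN N).dualAnnihilator := by
    rintro f ⟨c, rfl⟩
    rw [Submodule.mem_dualAnnihilator]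
    intro u hu
    have : c * u = 0 := by rw [mul_comm]; exact hu c
    simp [hΦapp, this]
  -- dimension count
  have hd1 : Module.finrank ℂ (LinearMap.range Φ) + 1 = Module.finrank ℂ N := by
    have := LinearMap.finrank_range_add_finrank_ker Φ
    rwa [hker, hann] at this
  have hd2 : Module.finrank ℂ ((annN N).dualAnnihilator) + 1 = Module.finrank ℂ N := by
    have e := Subspace.quotEquivAnnihilator (annN N)
    have h1 : Module.finrank ℂ (N ⧸ (annN N)) =
        Module.finrank ℂ ((annN N).dualAnnihilator) := e.finrank_eq
    have h2 := Submodule.finrank_quotient_add_finrank (annN N)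
    rw [hann] at h2
    rw [← h1]
    exact h2
  have hreq : LinearMap.range Φ = (annN N).dualAnnihilator :=
    Submodule.eq_of_le_of_finrank_le hrange (by omega)
  -- `g ∘ lam` lies in the dual annihilator
  have hmem : (g ∘ₗ lam) ∈ (annN N).dualAnnihilator := by
    rw [Submodule.mem_dualAnnihilator]
    intro u hu
    simp [hlz u hu]
  rw [← hreq] at hmem
  obtain ⟨c₀, hc₀⟩ := hmem
  refine ⟨c₀ - π c₀, ?_, ?_⟩
  · rw [map_sub, hπid _ (hπr c₀), sub_self]
  · intro u
    have hzero : π c₀ * u = 0 := hπr c₀ u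
    have hmul : (c₀ - π c₀) * u = c₀ * u := by rw [sub_mul, hzero, sub_zero]
    rw [hmul]
    have h1 : g (π (c₀ * u)) = g (lam u) := by
      have := LinearMap.congr_fun hc₀ u
      simpa [hΦapp] using this
    calc lam u = g (lam u) • a := hrep _ (hlr u)
    _ = g (π (c₀ * u)) • a := by rw [h1]
    _ = π (c₀ * u) := (hrep _ (hπr _)).symm
end

section
/- With the notation of a nil-polynomial P = ω ∘ exp₂ ∘ φ on W arising from an admissible algebra N of nil-index ν, if dim N ≥ 2 (equivalently W ≠ {0}), then the top homogeneous component P^{[ν]} is not identically zero. -/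
open Finset

section Aux

variable {N : Type*} [NonUnitalCommRing N] [Module ℂ N] [SMulCommClass ℂ N N]
    [IsScalarTower ℂ N N]

lemma upow_one (u : N) : upow u 1 = u := rfl

lemma upow_succ_succ (u : N) (m : ℕ) : upow u (m+2) = u * upow u (m+1) := rfl

/-- If a "polynomial curve" lies in a submodule for all scalars, all coefficients do. -/
lemma coeff_mem {V : Type*} [AddCommGroup V] [Module ℂ V] (S : Submodule ℂ V)
    (n : ℕ) (c : ℕ → V) (h : ∀ t : ℂ, (∑ k ∈ Finset.range (n+1), t^k • c k) ∈ S) :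
    ∀ k, k ≤ n → c k ∈ S := by
  intro k hk
  rw [← Submodule.Quotient.mk_eq_zero, ← Module.forall_dual_apply_eq_zero_iff ℂ]
  intro ℓ
  set q : Polynomial ℂ :=
    ∑ j ∈ Finset.range (n+1), Polynomial.monomial j (ℓ (S.mkQ (c j))) with hq
  have hqe : ∀ t : ℂ, q.eval t = 0 := by
    intro t
    have h0 : S.mkQ (∑ k ∈ Finset.range (n+1), t^k • c k) = 0 := by
      rw [Submodule.mkQ_apply, Submodule.Quotient.mk_eq_zero]; exact h t
    calc q.eval t = ∑ j ∈ Finset.range (n+1), ℓ (S.mkQ (c j)) * t^j := by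
          simp [hq, Polynomial.eval_finset_sum]
      _ = ℓ (S.mkQ (∑ k ∈ Finset.range (n+1), t^k • c k)) := by
          rw [map_sum, map_sum]
          refine Finset.sum_congr rfl fun j _ => ?_
          rw [map_smul, map_smul, smul_eq_mul, mul_comm]
      _ = 0 := by rw [h0, map_zero]
  have hq0 : q = 0 := Polynomial.funext fun t => by simp [hqe t]
  have hco := Polynomial.ext_iff.mp hq0 k
  have : q.coeff k = ℓ (S.mkQ (c k)) := by
    rw [hq, Polynomial.finset_sum_coeff]
    simp only [Polynomial.coeff_monomial]
    rw [Finset.sum_ite_eq' (Finset.range (n+1)) k]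
    simp [Nat.lt_succ_of_le hk]
  rw [this] at hco
  simpa using hco

/-- Span of `m`-th powers. -/
def powSpan (N : Type*) [NonUnitalCommRing N] [Module ℂ N] (m : ℕ) : Submodule ℂ N :=
  Submodule.span ℂ {x : N | ∃ w : N, x = upow w m}

local notation "A" => Unitization ℂ N

/-- `inr` as a ℂ-linear map. -/
def inrL : N →ₗ[ℂ] A where
  toFun := Unitization.inr
  map_add' := Unitization.inr_add ℂ
  map_smul' := fun c x => Unitization.inr_smul ℂ c x

lemma inrL_inj : Function.Injective (inrL (N := N)) :=
  fun _ _ h => Unitization.inr_injective h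

lemma inr_upow (u : N) (m : ℕ) : (inrL (upow u (m+1)) : A) = (inrL u) ^ (m+1) := by
  induction m with
  | zero => simp [upow_one]
  | succ m ih =>
      rw [upow_succ_succ]
      show Unitization.inr (u * upow u (m+1)) = _
      rw [Unitization.inr_mul]
      calc (Unitization.inr u : A) * Unitization.inr (upow u (m+1))
          = inrL u * inrL (upow u (m+1)) := rfl
        _ = inrL u * (inrL u)^(m+1) := by rw [ih]
        _ = (inrL u)^(m+2) := by ring

lemma mul_upow_mem (u w : N) (m : ℕ) :
    u * upow w (m+1) ∈ powSpan N (m+2) := by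
  set S : Submodule ℂ A := (powSpan N (m+2)).map inrL with hS
  have key : ∀ t : ℂ, (∑ k ∈ Finset.range (m+3),
      t^k • ((Nat.choose (m+2) k : ℂ) • ((inrL u)^k * (inrL w)^(m+2-k)))) ∈ S := by
    intro t
    have hmem : upow (w + t • u) (m+2) ∈ powSpan N (m+2) :=
      Submodule.subset_span ⟨w + t • u, rfl⟩
    have hexp : (inrL (upow (w + t • u) (m+2)) : A)
        = ∑ k ∈ Finset.range (m+3),
          t^k • ((Nat.choose (m+2) k : ℂ) • ((inrL u)^k * (inrL w)^(m+2-k))) := by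
      rw [show (m+2) = (m+1)+1 from rfl, inr_upow]
      rw [map_add, map_smul, add_comm (inrL w)]
      rw [add_pow (t • inrL u) (inrL w) (m+2)]
      refine Finset.sum_congr rfl fun k hk => ?_
      rw [smul_pow, smul_mul_assoc, smul_mul_assoc]
      congr 1
      rw [← map_natCast (algebraMap ℂ (Unitization ℂ N)) (Nat.choose (m+2) k),
        Algebra.algebraMap_eq_smul_one, mul_smul_comm, mul_one]
    rw [← hexp]
    exact ⟨_, hmem, rfl⟩
  have h1 : ((Nat.choose (m+2) 1 : ℂ) • ((inrL u)^1 * (inrL w)^(m+1))) ∈ S := by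
    have := coeff_mem S (m+2) _ key 1 (by omega)
    simpa using this
  have h2 : (inrL ((m+2 : ℂ) • (u * upow w (m+1))) : A)
      = (Nat.choose (m+2) 1 : ℂ) • ((inrL u)^1 * (inrL w)^(m+1)) := by
    rw [map_smul, pow_one, ← inr_upow]
    have : (inrL (u * upow w (m+1)) : A)
        = inrL u * inrL (upow w (m+1)) := Unitization.inr_mul ℂ _ _
    rw [this, Nat.choose_one_right]
    push_cast
    ring_nf
  rw [← h2] at h1
  obtain ⟨y, hy, hyeq⟩ := h1
  have hy' : y = (m+2 : ℂ) • (u * upow w (m+1)) := inrL_inj hyeq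
  rw [hy'] at hy
  have hne : (m+2 : ℂ) ≠ 0 := by
    have : ((m+2 : ℕ) : ℂ) ≠ 0 := Nat.cast_ne_zero.mpr (by omega)
    exact_mod_cast this
  have := (powSpan N (m+2)).smul_mem (m+2 : ℂ)⁻¹ hy
  rwa [inv_smul_smul₀ hne] at this

lemma npow_le_powSpan : ∀ j : ℕ, npow N (j+1) ≤ powSpan N (j+1) := by
  intro j
  induction j with
  | zero =>
      intro x _
      exact Submodule.subset_span ⟨x, rfl⟩
  | succ j ih =>
      show npow N (j+2) ≤ powSpan N (j+2)
      rw [show npow N (j+2) = Submodule.span ℂ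
        {x : N | ∃ u : N, ∃ v ∈ npow N (j+1), x = u * v} from rfl]
      rw [Submodule.span_le]
      rintro x ⟨u, v, hv, rfl⟩
      have hv' : v ∈ powSpan N (j+1) := ih hv
      refine Submodule.span_induction ?_ ?_ ?_ ?_ hv'
      · rintro y ⟨w, rfl⟩
        exact mul_upow_mem u w j
      · simp
      · intro y z _ _ hy hz
        rw [mul_add]; exact (powSpan N (j+2)).add_mem hy hz
      · intro c y _ hy
        rw [mul_smul_comm]; exact (powSpan N (j+2)).smul_mem c hy

lemma upow_add_ann (u b : N) (hb : b ∈ annN N) (m : ℕ) :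
    upow (u + b) (m+2) = upow u (m+2) := by
  have hb' : ∀ v : N, b * v = 0 := hb
  induction m with
  | zero =>
      rw [upow_succ_succ, upow_one, upow_succ_succ, upow_one]
      rw [add_mul, mul_add, hb' (u + b), mul_comm u b, hb' u, add_zero, add_zero]
  | succ m ih =>
      have h3 : upow (u + b) (m+3) = (u + b) * upow (u + b) (m+2) := rfl
      rw [show m+1+2 = m+3 from rfl, h3, ih, add_mul, hb' (upow u (m+2)), add_zero]
      rfl

end Aux

/-- For a nil-polynomial `P = ω ∘ exp₂ ∘ φ` on `W` arising from an
admissible algebra `N` of nil-index `ν`, if `dim N ≥ 2` then the top homogeneous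
component `P^{[ν]}(x) = ω(φ(x)^ν)/ν!` is not identically zero. -/
theorem stmt10 (N : Type*) [NonUnitalCommRing N] [Module ℂ N] [SMulCommClass ℂ N N]
    [IsScalarTower ℂ N N] [FiniteDimensional ℂ N]
    (ν : ℕ) (hnil : npow N (ν + 1) = ⊥) (hν : npow N ν ≠ ⊥)
    (hann : Module.finrank ℂ (annN N) = 1)
    (W : Type*) [AddCommGroup W] [Module ℂ W] [FiniteDimensional ℂ W]
    (ω : N →ₗ[ℂ] ℂ) (hω : ∃ a ∈ annN N, ω a ≠ 0)
    (φ : W →ₗ[ℂ] N) (hinj : Function.Injective φ)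
    (hrange : LinearMap.range φ = LinearMap.ker ω)
    (hdim : 2 ≤ Module.finrank ℂ N) :
    ∃ x : W, ω (upow (φ x) ν) ≠ 0 := by
  obtain ⟨a, haAnn, haω⟩ := hω
  -- N is nontrivial
  have hnt : Nontrivial N := by
    have : a ≠ 0 := fun h => haω (by simp [h])
    exact ⟨a, 0, this⟩
  -- ν ≥ 2
  have hν2 : 2 ≤ ν := by
    by_contra h
    interval_cases ν
    · have hb : (⊤ : Submodule ℂ N) = ⊥ := hnil
      obtain ⟨x, y, hxy⟩ := hnt
      have hx := (Submodule.eq_bot_iff _).mp hb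
      exact hxy (by rw [hx x trivial, hx y trivial])
    · -- ν = 1 : npow N 2 = ⊥ means all products vanish, so annN = ⊤, finrank 1 < 2
      have h2 : npow N 2 = Submodule.span ℂ
          {x : N | ∃ u : N, ∃ v ∈ npow N 1, x = u * v} := rfl
      rw [h2, Submodule.span_eq_bot] at hnil
      have hall : ∀ u v : N, u * v = 0 := fun u v =>
        hnil _ ⟨u, v, trivial, rfl⟩
      have htop : annN N = ⊤ := by
        rw [Submodule.eq_top_iff']; intro x v; exact hall x v
      rw [htop, finrank_top] at hann
      omega
  obtain ⟨m, rfl⟩ : ∃ m, ν = m + 2 := ⟨ν - 2, by omega⟩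
  -- element of npow N ν nonzero
  obtain ⟨p, hp, hp0⟩ := Submodule.exists_mem_ne_zero_of_ne_bot hν
  -- npow ν ≤ annN
  have hpann : p ∈ annN N := by
    intro v
    have : v * p ∈ npow N (m + 3) :=
      Submodule.subset_span ⟨v, p, hp, rfl⟩
    rw [show m + 2 + 1 = m + 3 from rfl] at hnil
    rw [hnil] at this
    rw [mul_comm]
    exact this
  -- annN = span {a}
  have ha0 : a ≠ 0 := fun h => haω (by simp [h])
  have hspan : (ℂ ∙ a) = annN N := by
    apply Submodule.eq_of_le_of_finrank_eq
    · rwa [Submodule.span_singleton_le_iff_mem]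
    · rw [hann, finrank_span_singleton ha0]
  -- ω p ≠ 0
  have hωp : ω p ≠ 0 := by
    rw [← hspan] at hpann
    obtain ⟨c, rfl⟩ := Submodule.mem_span_singleton.mp hpann
    have hc : c ≠ 0 := fun h => hp0 (by simp [h])
    simp only [map_smul, smul_eq_mul]
    exact mul_ne_zero hc haω
  -- ∃ u ∈ N with ω (u^ν) ≠ 0
  have hexu : ∃ u : N, ω (upow u (m+2)) ≠ 0 := by
    by_contra h
    push_neg at h
    have hle : powSpan N (m+2) ≤ LinearMap.ker ω := by
      rw [powSpan, Submodule.span_le]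
      rintro x ⟨w, rfl⟩
      exact h w
    have : p ∈ LinearMap.ker ω := hle (npow_le_powSpan (m+1) hp)
    exact hωp this
  obtain ⟨u, hu⟩ := hexu
  -- adjust u into ker ω
  set b : N := -((ω u / ω a) • a) with hb
  have hbann : b ∈ annN N := (annN N).neg_mem ((annN N).smul_mem _ haAnn)
  have hker : u + b ∈ LinearMap.ker ω := by
    rw [LinearMap.mem_ker, map_add, hb, map_neg, map_smul, smul_eq_mul,
      div_mul_cancel₀ _ haω]
    ring
  rw [← hrange] at hker
  obtain ⟨x, hx⟩ := hker
  refine ⟨x, ?_⟩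
  rw [hx, upow_add_ann u b hbann m]
  exact hu
end
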